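/- arXiv:math/0404425 — 2 statements merged into one kernel-verified Lean document; each statement's English description precedes it below -/
import Mathlib

section
/- Let M be an abelian group with an automorphism φ, m a positive integer, and t : ⊕_{i ∈ ℤ/m} M → ⊕_{i ∈ ℤ/m} M the map (t f)^{(i)} = φ(f^{(i-1)}). Define S_m : ⊕_{i ∈ ℤ/m} M → M by S_m(f) = Σ_{i ∈ ℤ/m} φ^{-\bar i}(f^{(i)}). Then S_m is surjective, and an element f lies in the image of t - 1 if and only if S_m(f) ∈ (1 - φ^{-m})M. In particular S_m induces an isomorphism coker(t-1) ≅ M/(1-φ^{-m})M. -/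
private lemma zmod_sum' {M : Type*} [AddCommMonoid M] (m : ℕ) [NeZero m] (G : ZMod m → M) :
    ∑ i : ZMod m, G i = ∑ j ∈ Finset.range m, G (j : ZMod m) := by
  refine Finset.sum_nbij' (fun i => i.val) (fun j => (j : ZMod m)) ?_ ?_ ?_ ?_ ?_
  · intro a _; exact Finset.mem_range.2 a.val_lt
  · intro a _; exact Finset.mem_univ _
  · intro a _; exact ZMod.natCast_rightInverse a
  · intro a ha; exact ZMod.val_cast_of_lt (Finset.mem_range.1 ha)
  · intro a _; rw [ZMod.natCast_rightInverse a]

private lemma zmod_neg_one_cast (m : ℕ) [NeZero m] : ((m - 1 : ℕ) : ZMod m) = -1 := by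
  have hm : 1 ≤ m := Nat.one_le_iff_ne_zero.2 (NeZero.ne m)
  have h2 : (((m - 1) + 1 : ℕ) : ZMod m) = 0 := by
    rw [Nat.sub_add_cancel hm]; exact ZMod.natCast_self m
  push_cast at h2
  linear_combination h2

private lemma zmod_val_neg_one' (m : ℕ) [NeZero m] : (-1 : ZMod m).val = m - 1 := by
  have hm : 1 ≤ m := Nat.one_le_iff_ne_zero.2 (NeZero.ne m)
  rw [← zmod_neg_one_cast m, ZMod.val_cast_of_lt (by omega)]

private lemma zmod_val_add_one' {m : ℕ} [NeZero m] (j : ZMod m) (h : j ≠ -1) :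
    ((j + 1 : ZMod m)).val = j.val + 1 := by
  have hm : 1 ≤ m := Nat.one_le_iff_ne_zero.2 (NeZero.ne m)
  have hlt : j.val < m := j.val_lt
  have hjm : j.val + 1 < m := by
    rcases Nat.lt_or_ge (j.val + 1) m with h1 | h1
    · exact h1
    · exfalso
      apply h
      have hv : j.val = m - 1 := by omega
      have hj : ((j.val : ℕ) : ZMod m) = j := ZMod.natCast_rightInverse j
      rw [← hj, hv, zmod_neg_one_cast m]
  have e : (j + 1 : ZMod m) = ((j.val + 1 : ℕ) : ZMod m) := by
    rw [Nat.cast_add, Nat.cast_one, ZMod.natCast_rightInverse j]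
  rw [e, ZMod.val_cast_of_lt hjm]

private lemma aut_zpow_apply {M : Type*} [AddCommGroup M] (φ : AddAut M) (a b : ℤ) (x : M) :
    (a • φ) ((b • φ) x) = ((a + b) • φ) x := by
  rw [← AddAut.add_apply, ← add_zsmul]

private lemma zpow_congr' {M : Type*} [AddCommGroup M] (φ : AddAut M) {a b : ℤ} (h : a = b)
    (x : M) : (a • φ) x = (b • φ) x := by rw [h]

/-- With `t` the twisted cyclic shift on `⊕_{i ∈ ℤ/m} M` and
`S_m(f) = ∑_i φ^{-\bar i}(f⁽ⁱ⁾)`, the map `S_m` is surjective, an element `f` lies in the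
image of `t - 1` iff `S_m f ∈ (1 - φ^{-m})M`, and `S_m` induces an isomorphism
`coker (t - 1) ≅ M/(1 - φ^{-m})M`. -/
theorem stmt_2 (M : Type*) [AddCommGroup M] (φ : AddAut M) (m : ℕ) [NeZero m]
    (t : (ZMod m → M) →+ (ZMod m → M))
    (ht : ∀ (f : ZMod m → M) (i : ZMod m), t f i = φ (f (i - 1)))
    (S : (ZMod m → M) →+ M)
    (hS : ∀ f : ZMod m → M, S f = ∑ i : ZMod m, ((-(i.val : ℤ)) • φ) (f i)) :
    Function.Surjective S ∧
    (∀ f : ZMod m → M,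
      (∃ g : ZMod m → M, t g - g = f) ↔ ∃ x : M, S f = x - ((-(m : ℤ)) • φ) x) ∧
    ∃ ψ : ((ZMod m → M) ⧸ (t - AddMonoidHom.id (ZMod m → M)).range) ≃+
        (M ⧸ (AddMonoidHom.id M - ((-(m : ℤ)) • φ).toAddMonoidHom).range),
      ∀ f : ZMod m → M, ψ (QuotientAddGroup.mk f) = QuotientAddGroup.mk (S f) := by
  have hm : 1 ≤ m := Nat.one_le_iff_ne_zero.2 (NeZero.ne m)
  have hcast : ∀ i : ZMod m, ((i.val : ℕ) : ZMod m) = i := fun i => ZMod.natCast_rightInverse i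
  -- Surjectivity of S
  have hsurj : Function.Surjective S := by
    intro x
    refine ⟨fun i => if i = 0 then x else 0, ?_⟩
    rw [hS, Finset.sum_eq_single 0]
    · simp
    · intro b _ hb; simp [hb]
    · intro h; exact absurd (Finset.mem_univ 0) h
  -- forward computation
  have key₁ : ∀ g : ZMod m → M,
      S (t g - g) = φ (g (-1)) - ((-(m : ℤ)) • φ) (φ (g (-1))) := by
    intro g
    rw [map_sub, hS, hS]
    have h1 : (∑ i : ZMod m, ((-(i.val : ℤ)) • φ) (t g i))
        = ∑ j : ZMod m, ((-((((j + 1 : ZMod m)).val : ℤ))) • φ) (φ (g j)) := by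
      refine Fintype.sum_equiv (Equiv.subRight (1 : ZMod m)) _ _ ?_
      intro i
      rw [ht]
      simp [Equiv.subRight_apply]
    rw [h1, ← Finset.sum_sub_distrib, Finset.sum_eq_single (-1 : ZMod m)]
    · have e0 : ((-1 : ZMod m) + 1) = 0 := by ring
      rw [e0, ZMod.val_zero, zmod_val_neg_one']
      have h2 : φ (g (-1)) = ((1 : ℤ) • φ) (g (-1)) := by rw [one_zsmul]
      have t1 : ((-((0 : ℕ) : ℤ)) • φ) (φ (g (-1))) = φ (g (-1)) := by
        norm_num
      have t2 : ((-(m : ℤ)) • φ) (φ (g (-1))) = ((-(((m - 1 : ℕ)) : ℤ)) • φ) (g (-1)) := by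
        rw [h2, aut_zpow_apply]
        exact zpow_congr' φ (by omega) _
      rw [t1, t2]
    · intro b _ hb
      rw [zmod_val_add_one' b hb]
      have h2 : φ (g b) = ((1 : ℤ) • φ) (g b) := by rw [one_zsmul]
      have e : ((-((b.val + 1 : ℕ) : ℤ)) • φ) (φ (g b)) = ((-(b.val : ℤ)) • φ) (g b) := by
        rw [h2, aut_zpow_apply]
        exact zpow_congr' φ (by omega) _
      rw [e, sub_self]
    · intro h; exact absurd (Finset.mem_univ _) h
  -- the iff
  have hiff : ∀ f : ZMod m → M,
      (∃ g : ZMod m → M, t g - g = f) ↔ ∃ x : M, S f = x - ((-(m : ℤ)) • φ) x := by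
    intro f
    constructor
    · rintro ⟨g, rfl⟩
      exact ⟨φ (g (-1)), key₁ g⟩
    · rintro ⟨x, hx⟩
      set g : ZMod m → M := fun i =>
        ((i.val : ℤ) • φ) x -
          ∑ j ∈ Finset.range (i.val + 1), (((i.val : ℤ) - (j : ℤ)) • φ) (f (j : ZMod m))
        with hg
      refine ⟨g, ?_⟩
      funext i
      rw [Pi.sub_apply, ht]
      by_cases hi : i = 0
      · subst hi
        have h0 : (0 : ZMod m) - 1 = -1 := by ring
        rw [h0]
        have hg0 : g 0 = x - f 0 := by
          simp [hg, ZMod.val_zero]; rfl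
        have hgm : φ (g (-1)) = x := by
          simp only [hg, zmod_val_neg_one' m]
          rw [map_sub, map_sum]
          have e1 : φ (((((m - 1 : ℕ)) : ℤ) • φ) x) = ((m : ℤ) • φ) x := by
            rw [show φ (((((m - 1 : ℕ)) : ℤ) • φ) x)
                = ((1 : ℤ) • φ) (((((m - 1 : ℕ)) : ℤ) • φ) x) by rw [one_zsmul],
              aut_zpow_apply]
            exact zpow_congr' φ (by omega) _
          have e2 : ∑ j ∈ Finset.range ((m - 1) + 1),
              φ ((((((m - 1 : ℕ)) : ℤ) - (j : ℤ)) • φ) (f (j : ZMod m)))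
              = ((m : ℤ) • φ) (S f) := by
            rw [hS, zmod_sum' m, map_sum, Nat.sub_add_cancel hm]
            refine Finset.sum_congr rfl ?_
            intro j hj
            have hjv : ((j : ZMod m)).val = j :=
              ZMod.val_cast_of_lt (Finset.mem_range.1 hj)
            rw [hjv]
            rw [show φ ((((((m - 1 : ℕ)) : ℤ) - (j : ℤ)) • φ) (f (j : ZMod m)))
                = ((1 : ℤ) • φ) ((((((m - 1 : ℕ)) : ℤ) - (j : ℤ)) • φ) (f (j : ZMod m)))
                by rw [one_zsmul],
              aut_zpow_apply, aut_zpow_apply]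
            exact zpow_congr' φ (by omega) _
          rw [e1, e2, hx, map_sub, aut_zpow_apply]
          have : (((m : ℤ) + -(m : ℤ)) • φ) x = x := by
            rw [show (m : ℤ) + -(m : ℤ) = 0 by ring, zero_zsmul]; rfl
          rw [this]
          abel
        rw [hgm, hg0]
        abel
      · have hk : 1 ≤ i.val := by
          rcases Nat.eq_zero_or_pos i.val with h0 | h0
          · exact absurd (by rw [← hcast i, h0]; simp) hi
          · exact h0
        have hlt : i.val < m := i.val_lt
        have hsub : (i - 1 : ZMod m).val = i.val - 1 := by
          have e : (i - 1 : ZMod m) = ((i.val - 1 : ℕ) : ZMod m) := by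
            rw [Nat.cast_sub hk, hcast i, Nat.cast_one]
          rw [e, ZMod.val_cast_of_lt (by omega)]
        simp only [hg, hsub]
        rw [map_sub, map_sum]
        have e1 : φ (((((i.val - 1 : ℕ)) : ℤ) • φ) x) = (((i.val : ℕ) : ℤ) • φ) x := by
          rw [show φ (((((i.val - 1 : ℕ)) : ℤ) • φ) x)
              = ((1 : ℤ) • φ) (((((i.val - 1 : ℕ)) : ℤ) • φ) x) by rw [one_zsmul],
            aut_zpow_apply]
          exact zpow_congr' φ (by omega) _
        have e2 : ∑ j ∈ Finset.range ((i.val - 1) + 1),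
            φ ((((((i.val - 1 : ℕ)) : ℤ) - (j : ℤ)) • φ) (f (j : ZMod m)))
            = ∑ j ∈ Finset.range ((i.val - 1) + 1),
              ((((i.val : ℕ) : ℤ) - (j : ℤ)) • φ) (f (j : ZMod m)) := by
          refine Finset.sum_congr rfl ?_
          intro j hj
          rw [show φ ((((((i.val - 1 : ℕ)) : ℤ) - (j : ℤ)) • φ) (f (j : ZMod m)))
              = ((1 : ℤ) • φ) ((((((i.val - 1 : ℕ)) : ℤ) - (j : ℤ)) • φ) (f (j : ZMod m)))
              by rw [one_zsmul],
            aut_zpow_apply]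
          exact zpow_congr' φ (by omega) _
        rw [e2, e1, Nat.sub_add_cancel hk, Finset.sum_range_succ]
        have e3 : ((((i.val : ℕ) : ℤ) - ((i.val : ℕ) : ℤ)) • φ) (f ((i.val : ℕ) : ZMod m))
            = f i := by
          rw [sub_self, zero_zsmul, hcast i]; rfl
        rw [e3]
        abel
  refine ⟨hsurj, hiff, ?_⟩
  -- the isomorphism
  have hker : (t - AddMonoidHom.id (ZMod m → M)).range ≤
      ((QuotientAddGroup.mk'
        (AddMonoidHom.id M - ((-(m : ℤ)) • φ).toAddMonoidHom).range).comp S).ker := by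
    rintro f ⟨g, rfl⟩
    simp only [AddMonoidHom.mem_ker, AddMonoidHom.comp_apply, QuotientAddGroup.mk'_apply]
    rw [QuotientAddGroup.eq_zero_iff]
    have hfg : (t - AddMonoidHom.id (ZMod m → M)) g = t g - g := rfl
    rw [hfg]
    obtain ⟨x, hx⟩ := (hiff (t g - g)).1 ⟨g, rfl⟩
    refine ⟨x, ?_⟩
    rw [AddMonoidHom.sub_apply, AddMonoidHom.id_apply]
    rw [show (((-(m : ℤ)) • φ).toAddMonoidHom) x = ((-(m : ℤ)) • φ) x from rfl]
    exact hx.symm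
  let ψ₀ := QuotientAddGroup.lift _ ((QuotientAddGroup.mk' _).comp S) hker
  have hψ₀ : ∀ f : ZMod m → M, ψ₀ (QuotientAddGroup.mk f) = QuotientAddGroup.mk (S f) :=
    fun f => rfl
  have hinj : Function.Injective ψ₀ := by
    rw [injective_iff_map_eq_zero]
    intro a ha
    obtain ⟨f, rfl⟩ := QuotientAddGroup.mk_surjective a
    rw [hψ₀, QuotientAddGroup.eq_zero_iff] at ha
    rw [QuotientAddGroup.eq_zero_iff]
    obtain ⟨x, hx⟩ := ha
    obtain ⟨g, hgf⟩ := (hiff f).2 ⟨x, by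
      simp only [AddMonoidHom.sub_apply, AddMonoidHom.id_apply,
        AddEquiv.coe_toAddMonoidHom] at hx
      exact hx.symm⟩
    exact ⟨g, by simpa [AddMonoidHom.sub_apply] using hgf⟩
  have hsurj₀ : Function.Surjective ψ₀ := by
    intro z
    obtain ⟨y, rfl⟩ := QuotientAddGroup.mk_surjective z
    obtain ⟨f, rfl⟩ := hsurj y
    exact ⟨QuotientAddGroup.mk f, rfl⟩
  exact ⟨AddEquiv.ofBijective ψ₀ ⟨hinj, hsurj₀⟩, fun f => rfl⟩
end

section
/- Let m, n be positive integers, M an abelian group with automorphism φ, and define μ-compatibility maps as follows: for x ∈ ⊕_{i ∈ ℤ/m} ℤ set μ_m(x) = Σ_{i ∈ ℤ/m} (x^{(i)}/2 + \bar i·x^{(i)}/m mod ℤ, -x^{(i)}/m) ∈ ℚ/ℤ ⊕ ℚ. Then μ_{mn} ∘ δ_m^n = μ_m, where δ_m^n : ⊕_{i ∈ ℤ/m} ℤ → ⊕_{j ∈ ℤ/mn} ℤ is given by δ_m^n(x)^{(j)} = x^{(j mod m)}. -/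
open Finset

private lemma gauss_q (n : ℕ) : ∑ k ∈ Finset.range n, (k : ℚ) = n * (n - 1) / 2 := by
  induction n with
  | zero => simp
  | succ n ih =>
    rw [Finset.sum_range_succ, ih]
    push_cast
    ring



/-- With `μ_m : ⊕_{i ∈ ℤ/m} ℤ → ℚ/ℤ ⊕ ℚ`,
`μ_m(x) = ∑_i (x⁽ⁱ⁾/2 + \bar i·x⁽ⁱ⁾/m mod ℤ, -x⁽ⁱ⁾/m)`, and
`δ_m^n : ⊕_{i ∈ ℤ/m} ℤ → ⊕_{j ∈ ℤ/mn} ℤ`, `δ_m^n(x)⁽ʲ⁾ = x⁽ʲ mod m⁾`, one has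
`μ_{mn} ∘ δ_m^n = μ_m`. -/
theorem stmt_13 (m n : ℕ) [NeZero m] [NeZero n] [NeZero (m * n)]
    (x : ZMod m → ℤ) :
    ((∑ j : ZMod (m * n),
        (QuotientAddGroup.mk
          ((x (ZMod.castHom ⟨n, rfl⟩ (ZMod m) j) : ℚ) / 2
            + (j.val : ℚ) * (x (ZMod.castHom ⟨n, rfl⟩ (ZMod m) j) : ℚ) / ((m : ℚ) * (n : ℚ))) :
          ℚ ⧸ AddSubgroup.zmultiples (1 : ℚ))),
      ∑ j : ZMod (m * n),
        -((x (ZMod.castHom ⟨n, rfl⟩ (ZMod m) j) : ℚ)) / ((m : ℚ) * (n : ℚ)))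
    = ((∑ i : ZMod m,
        (QuotientAddGroup.mk ((x i : ℚ) / 2 + (i.val : ℚ) * (x i : ℚ) / (m : ℚ)) :
          ℚ ⧸ AddSubgroup.zmultiples (1 : ℚ))),
      ∑ i : ZMod m, -((x i : ℚ)) / (m : ℚ)) := by
  have hm : (m : ℚ) ≠ 0 := Nat.cast_ne_zero.mpr (NeZero.ne m)
  have hn : (n : ℚ) ≠ 0 := Nat.cast_ne_zero.mpr (NeZero.ne n)
  set e : ZMod m × Fin n → ZMod (m * n) :=
    fun p => ((p.1.val + p.2.val * m : ℕ) : ZMod (m * n)) with he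
  have hlt : ∀ p : ZMod m × Fin n, p.1.val + p.2.val * m < m * n := by
    intro p
    have h1 : p.1.val < m := ZMod.val_lt p.1
    have h2 : p.2.val < n := p.2.isLt
    calc p.1.val + p.2.val * m < m + p.2.val * m := by omega
      _ = (p.2.val + 1) * m := by ring
      _ ≤ n * m := Nat.mul_le_mul_right m h2
      _ = m * n := Nat.mul_comm n m
  have hval : ∀ p, (e p).val = p.1.val + p.2.val * m := fun p =>
    ZMod.val_cast_of_lt (hlt p)
  have hinj : Function.Injective e := by
    intro p q h
    have hv := congrArg ZMod.val h
    rw [hval, hval] at hv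
    have h1 : p.1.val = q.1.val := by
      have := congrArg (· % m) hv
      simpa [Nat.add_mul_mod_self_right, Nat.mod_eq_of_lt (ZMod.val_lt _)] using this
    have h2 : p.2.val = q.2.val := by
      have hm0 : 0 < m := Nat.pos_of_ne_zero (NeZero.ne m)
      have : p.2.val * m = q.2.val * m := by omega
      exact Nat.eq_of_mul_eq_mul_right hm0 this
    exact Prod.ext (ZMod.val_injective m h1) (Fin.ext h2)
  have hbij : Function.Bijective e :=
    (Fintype.bijective_iff_injective_and_card e).mpr
      ⟨hinj, by simp [ZMod.card]⟩
  have hcast : ∀ p : ZMod m × Fin n,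
      ZMod.castHom (⟨n, rfl⟩ : m ∣ m * n) (ZMod m) (e p) = p.1 := by
    intro p
    have h0 : ZMod.castHom (⟨n, rfl⟩ : m ∣ m * n) (ZMod m)
        (((p.1.val + p.2.val * m : ℕ) : ZMod (m * n)))
        = ((p.1.val + p.2.val * m : ℕ) : ZMod m) := map_natCast _ _
    rw [he, h0]
    push_cast
    simp [ZMod.natCast_self, ZMod.natCast_val, ZMod.cast_id]
  rw [Prod.mk.injEq]
  constructor
  · rw [← Fintype.sum_bijective e hbij _ _ (fun p => rfl)]
    rw [Fintype.sum_prod_type]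
    refine Finset.sum_congr rfl fun i _ => ?_
    have key : ∀ k : Fin n,
        (QuotientAddGroup.mk
          ((x (ZMod.castHom ⟨n, rfl⟩ (ZMod m) (e (i, k))) : ℚ) / 2
            + ((e (i, k)).val : ℚ) * (x (ZMod.castHom ⟨n, rfl⟩ (ZMod m) (e (i, k))) : ℚ)
              / ((m : ℚ) * (n : ℚ))) : ℚ ⧸ AddSubgroup.zmultiples (1 : ℚ))
        = QuotientAddGroup.mk
          ((x i : ℚ) / 2 + ((i.val : ℚ) + (k.val : ℚ) * m) * (x i : ℚ) / ((m : ℚ) * (n : ℚ))) := by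
      intro k
      rw [hcast (i, k), hval (i, k)]
      push_cast
      rfl
    rw [Finset.sum_congr rfl fun k _ => key k]
    have mksum : ∑ k : Fin n,
        (QuotientAddGroup.mk
          ((x i : ℚ) / 2 + ((i.val : ℚ) + (k.val : ℚ) * m) * (x i : ℚ) / ((m : ℚ) * (n : ℚ))) :
          ℚ ⧸ AddSubgroup.zmultiples (1 : ℚ))
        = QuotientAddGroup.mk (∑ k : Fin n,
            ((x i : ℚ) / 2 + ((i.val : ℚ) + (k.val : ℚ) * m) * (x i : ℚ) / ((m : ℚ) * (n : ℚ)))) := by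
      exact (map_sum (QuotientAddGroup.mk' (AddSubgroup.zmultiples (1 : ℚ))) _ _).symm
    rw [mksum]
    have hsum : ∑ k : Fin n,
        ((x i : ℚ) / 2 + ((i.val : ℚ) + (k.val : ℚ) * m) * (x i : ℚ) / ((m : ℚ) * (n : ℚ)))
        = ((x i : ℚ) / 2 + (i.val : ℚ) * (x i : ℚ) / (m : ℚ)) + ((n : ℚ) - 1) * (x i : ℚ) := by
      rw [Fin.sum_univ_eq_sum_range
        (fun k => (x i : ℚ) / 2 + ((i.val : ℚ) + (k : ℚ) * m) * (x i : ℚ) / ((m : ℚ) * (n : ℚ)))]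
      have step : ∀ k ∈ Finset.range n,
          (x i : ℚ) / 2 + ((i.val : ℚ) + (k : ℚ) * m) * (x i : ℚ) / ((m : ℚ) * (n : ℚ))
          = ((x i : ℚ) / 2 + (i.val : ℚ) * (x i : ℚ) / ((m : ℚ) * (n : ℚ)))
            + (k : ℚ) * ((m : ℚ) * (x i : ℚ) / ((m : ℚ) * (n : ℚ))) := by
        intro k _
        ring
      rw [Finset.sum_congr rfl step, Finset.sum_add_distrib, Finset.sum_const,
        ← Finset.sum_mul, gauss_q, Finset.card_range, nsmul_eq_mul]
      field_simp
      ring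
    rw [hsum]
    have hmem : ((n : ℚ) - 1) * (x i : ℚ) ∈ AddSubgroup.zmultiples (1 : ℚ) := by
      refine AddSubgroup.mem_zmultiples_iff.mpr ⟨((n : ℤ) - 1) * x i, ?_⟩
      simp only [zsmul_eq_mul, mul_one]
      push_cast
      ring
    calc (QuotientAddGroup.mk (((x i : ℚ) / 2 + (i.val : ℚ) * (x i : ℚ) / (m : ℚ))
            + ((n : ℚ) - 1) * (x i : ℚ)) : ℚ ⧸ AddSubgroup.zmultiples (1 : ℚ))
        = QuotientAddGroup.mk ((x i : ℚ) / 2 + (i.val : ℚ) * (x i : ℚ) / (m : ℚ))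
          + QuotientAddGroup.mk (((n : ℚ) - 1) * (x i : ℚ)) := rfl
      _ = QuotientAddGroup.mk ((x i : ℚ) / 2 + (i.val : ℚ) * (x i : ℚ) / (m : ℚ)) := by
          rw [(QuotientAddGroup.eq_zero_iff _).mpr hmem, add_zero]
  · rw [← Fintype.sum_bijective e hbij _ _ (fun p => rfl)]
    rw [Fintype.sum_prod_type]
    refine Finset.sum_congr rfl fun i _ => ?_
    have : ∀ k : Fin n,
        -(x (ZMod.castHom (⟨n, rfl⟩ : m ∣ m * n) (ZMod m) (e (i, k))) : ℚ) / ((m : ℚ) * (n : ℚ))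
        = -(x i : ℚ) / ((m : ℚ) * (n : ℚ)) := fun k => by rw [hcast (i, k)]
    rw [Finset.sum_congr rfl fun k _ => this k, Finset.sum_const, Finset.card_univ,
      Fintype.card_fin, nsmul_eq_mul]
    field_simp
end
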